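/- Let α be a positive integer, Ω a nonempty finite set, and let μ assign to each subset S of {1,…,α} a probability mass function μ_S on Ω, satisfying the cut-and-paste property: h(μ_{S∪T}, μ_∅) = h(μ_S, μ_T) for all pairwise disjoint subsets S, T of {1,…,α}. Then for every subset S of {1,…,α}, h²(μ_∅, μ_S) ≤ 2·|S| · Σ_{i∈S} h²(μ_∅, μ_{{i}}). -/

import Mathlib

/-- The squared Hellinger distance between two probability mass functions on a
finite set: `h²(p,q) = (1/2)·Σ_ω (√(p ω) − √(q ω))²`. -/
noncomputable def hellingerSq {Ω : Type*} [Fintype Ω] (p q : Ω → ℝ) : ℝ :=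
  (1 / 2) * ∑ ω, (Real.sqrt (p ω) - Real.sqrt (q ω)) ^ 2

/-- The Hellinger distance `h(p,q) = √(h²(p,q))`. -/
noncomputable def hellinger {Ω : Type*} [Fintype Ω] (p q : Ω → ℝ) : ℝ :=
  Real.sqrt (hellingerSq p q)

lemma hellingerSq_nonneg {Ω : Type*} [Fintype Ω] (p q : Ω → ℝ) :
    0 ≤ hellingerSq p q := by
  unfold hellingerSq; positivity

lemma hellinger_nonneg {Ω : Type*} [Fintype Ω] (p q : Ω → ℝ) :
    0 ≤ hellinger p q := Real.sqrt_nonneg _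

lemma sq_hellinger {Ω : Type*} [Fintype Ω] (p q : Ω → ℝ) :
    hellinger p q ^ 2 = hellingerSq p q :=
  Real.sq_sqrt (hellingerSq_nonneg p q)

lemma hellingerSq_comm {Ω : Type*} [Fintype Ω] (p q : Ω → ℝ) :
    hellingerSq p q = hellingerSq q p := by
  unfold hellingerSq
  congr 1
  exact Finset.sum_congr rfl fun ω _ => by ring

lemma hellinger_comm {Ω : Type*} [Fintype Ω] (p q : Ω → ℝ) :
    hellinger p q = hellinger q p := by
  unfold hellinger; rw [hellingerSq_comm]

lemma hellinger_self {Ω : Type*} [Fintype Ω] (p : Ω → ℝ) :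
    hellinger p p = 0 := by
  simp [hellinger, hellingerSq]

noncomputable def sqrtVec {Ω : Type*} [Fintype Ω] (p : Ω → ℝ) : EuclideanSpace ℝ Ω :=
  (WithLp.equiv 2 (Ω → ℝ)).symm fun ω => Real.sqrt (p ω)

lemma hellinger_eq_dist {Ω : Type*} [Fintype Ω] (p q : Ω → ℝ) :
    hellinger p q = Real.sqrt (1 / 2) * dist (sqrtVec p) (sqrtVec q) := by
  have hd : dist (sqrtVec p) (sqrtVec q)
      = Real.sqrt (∑ ω, (Real.sqrt (p ω) - Real.sqrt (q ω)) ^ 2) := by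
    rw [EuclideanSpace.dist_eq]
    congr 1
    refine Finset.sum_congr rfl fun ω _ => ?_
    rw [sqrtVec, sqrtVec, WithLp.equiv_symm_apply, PiLp.toLp_apply, PiLp.toLp_apply,
      Real.dist_eq, sq_abs]
  rw [hellinger, hellingerSq, Real.sqrt_mul (by norm_num : (0:ℝ) ≤ 1/2), hd]

lemma hellinger_triangle {Ω : Type*} [Fintype Ω] (p q r : Ω → ℝ) :
    hellinger p r ≤ hellinger p q + hellinger q r := by
  rw [hellinger_eq_dist p r, hellinger_eq_dist p q, hellinger_eq_dist q r, ← mul_add]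
  exact mul_le_mul_of_nonneg_left (dist_triangle _ _ _) (Real.sqrt_nonneg _)

theorem hellingerSq_le_card_mul_sum_singletons {α : ℕ} (hα : 0 < α)
    {Ω : Type*} [Fintype Ω] [Nonempty Ω]
    (μ : Finset (Fin α) → Ω → ℝ)
    (hnonneg : ∀ S ω, 0 ≤ μ S ω)
    (hsum : ∀ S, ∑ ω, μ S ω = 1)
    (hcutpaste : ∀ S T : Finset (Fin α), Disjoint S T →
      hellinger (μ (S ∪ T)) (μ ∅) = hellinger (μ S) (μ T))
    (S : Finset (Fin α)) :
    hellingerSq (μ ∅) (μ S) ≤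
      2 * (S.card : ℝ) * ∑ i ∈ S, hellingerSq (μ ∅) (μ {i}) := by
  have key : ∀ S : Finset (Fin α),
      hellinger (μ ∅) (μ S) ≤ ∑ i ∈ S, hellinger (μ ∅) (μ {i}) := by
    intro S
    induction S using Finset.induction_on with
    | empty => simp [hellinger_self]
    | @insert a T ha ih =>
      have hd : Disjoint ({a} : Finset (Fin α)) T := by
        simpa using ha
      have hcp := hcutpaste {a} T hd
      rw [Finset.insert_eq, hellinger_comm, hcp, ← Finset.insert_eq,
        Finset.sum_insert ha]
      calc hellinger (μ {a}) (μ T)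
          ≤ hellinger (μ {a}) (μ ∅) + hellinger (μ ∅) (μ T) :=
            hellinger_triangle _ _ _
        _ ≤ hellinger (μ ∅) (μ {a}) + ∑ i ∈ T, hellinger (μ ∅) (μ {i}) := by
            rw [hellinger_comm]
            exact add_le_add le_rfl ih
  have h1 : hellingerSq (μ ∅) (μ S) ≤ (∑ i ∈ S, hellinger (μ ∅) (μ {i})) ^ 2 := by
    rw [← sq_hellinger]
    exact pow_le_pow_left₀ (hellinger_nonneg _ _) (key S) 2
  have h2 : (∑ i ∈ S, hellinger (μ ∅) (μ {i})) ^ 2 ≤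
      (S.card : ℝ) * ∑ i ∈ S, hellinger (μ ∅) (μ {i}) ^ 2 :=
    sq_sum_le_card_mul_sum_sq
  have h3 : (S.card : ℝ) * ∑ i ∈ S, hellinger (μ ∅) (μ {i}) ^ 2 ≤
      2 * (S.card : ℝ) * ∑ i ∈ S, hellingerSq (μ ∅) (μ {i}) := by
    simp_rw [sq_hellinger]
    rw [mul_assoc]
    have hnn : 0 ≤ (S.card : ℝ) * ∑ i ∈ S, hellingerSq (μ ∅) (μ {i}) := by
      apply mul_nonneg (by positivity)
      exact Finset.sum_nonneg fun i _ => hellingerSq_nonneg _ _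
    linarith
  linarith
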